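/- Let n ∈ {1,3}, α11, α22 ∈ (0,1], α12 ∈ (0,2], β11, β12, β22 > 0, s11, s12, s22 > 0, and consider J_n := inf over r > 0 (with p^{(n)}_{α12,β12,s12}(r) ≠ 0) of r^{α11+α22−2α12} · p^{(n)}_{α11,β11,s11}(r)·p^{(n)}_{α22,β22,s22}(r) / (p^{(n)}_{α12,β12,s12}(r))². If β12 < (β11 + β22)/2, then J_n = 0. -/

import Mathlib

open Set

open Filter Topology Real

noncomputable section

/-- The auxiliary functions `p⁽ⁿ⁾_{α,β,s}` for `n ∈ {1,3}`:
`p⁽¹⁾_{α,β,s}(r) = ((β+1)(sr)^α - α + 1) / (1+(sr)^α)^{β/α+2}` and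
`p⁽³⁾_{α,β,s}(r) = ((β+1)(β+3)(sr)^{2α} + (sr)^α (4β+5-3α-3βα-α²) + (α-1)(α-3))
  / (1+(sr)^α)^{β/α+3}`. -/
def pn (n : ℕ) (α β s r : ℝ) : ℝ :=
  if n = 1 then ((β + 1) * (s * r) ^ α - α + 1) / (1 + (s * r) ^ α) ^ (β / α + 2)
  else ((β + 1) * (β + 3) * (s * r) ^ (2 * α)
      + (s * r) ^ α * (4 * β + 5 - 3 * α - 3 * β * α - α ^ 2)
      + (α - 1) * (α - 3)) / (1 + (s * r) ^ α) ^ (β / α + 3)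

lemma pn1_eq (α β s r : ℝ) (hα : 0 < α) (hs : 0 < s) (hr : 0 < r) :
    r ^ (β + α) * pn 1 α β s r
      = ((β + 1) + (1 - α) * (s * r) ^ (-α)) * s ^ (-(β + α))
          / ((s * r) ^ (-α) + 1) ^ (β / α + 2) := by
  have hsr : 0 < s * r := mul_pos hs hr
  have hX : 0 < (s*r)^α := rpow_pos_of_pos hsr α
  have hT : 0 < ((s^α*r^α)⁻¹+1)^(β/α+2) := by positivity
  have e1 : (1 + (s*r)^α) ^ (β/α+2)
      = (s^(β+α) * s^α) * (r^(β+α) * r^α) * ((s*r)^(-α)+1)^(β/α+2) := by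
    have h1 : (1 + (s*r)^α) = (s*r)^α * ((s*r)^(-α) + 1) := by
      rw [Real.rpow_neg hsr.le]; field_simp
    rw [h1, Real.mul_rpow hX.le (by positivity), ← Real.rpow_mul hsr.le,
      show α * (β/α+2) = (β+α)+α by field_simp; ring,
      Real.rpow_add hsr, Real.mul_rpow hs.le hr.le, Real.mul_rpow hs.le hr.le]
    ring
  have e2 : (s*r)^(-α) = ((s^α)*(r^α))⁻¹ := by
    rw [Real.rpow_neg hsr.le, Real.mul_rpow hs.le hr.le]
  have e3 : (s*r)^α = s^α * r^α := Real.mul_rpow hs.le hr.le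
  have e4 : s^(-(β+α)) = (s^(β+α))⁻¹ := Real.rpow_neg hs.le _
  have hsa : (0:ℝ) < s^α := rpow_pos_of_pos hs α
  have hra : (0:ℝ) < r^α := rpow_pos_of_pos hr α
  have hsb : (0:ℝ) < s^(β+α) := rpow_pos_of_pos hs _
  have hrb : (0:ℝ) < r^(β+α) := rpow_pos_of_pos hr _
  rw [show pn 1 α β s r = ((β + 1) * (s * r) ^ α - α + 1) / (1 + (s * r) ^ α) ^ (β / α + 2)
    from if_pos rfl, e1, e2, e3, e4]
  field_simp
  ring

lemma pn3_eq (α β s r : ℝ) (hα : 0 < α) (hs : 0 < s) (hr : 0 < r) :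
    r ^ (β + α) * pn 3 α β s r
      = ((β + 1) * (β + 3) + (4 * β + 5 - 3 * α - 3 * β * α - α ^ 2) * (s * r) ^ (-α)
          + (α - 1) * (α - 3) * ((s * r) ^ (-α)) ^ 2) * s ^ (-(β + α))
          / ((s * r) ^ (-α) + 1) ^ (β / α + 3) := by
  have hsr : 0 < s * r := mul_pos hs hr
  have hX : 0 < (s*r)^α := rpow_pos_of_pos hsr α
  have hT : 0 < ((s^α*r^α)⁻¹+1)^(β/α+3) := by positivity
  have e1 : (1 + (s*r)^α) ^ (β/α+3)
      = (s^(β+α) * (s^α * s^α)) * (r^(β+α) * (r^α * r^α)) * ((s*r)^(-α)+1)^(β/α+3) := by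
    have h1 : (1 + (s*r)^α) = (s*r)^α * ((s*r)^(-α) + 1) := by
      rw [Real.rpow_neg hsr.le]; field_simp
    rw [h1, Real.mul_rpow hX.le (by positivity), ← Real.rpow_mul hsr.le,
      show α * (β/α+3) = (β+α)+(α+α) by field_simp; ring,
      Real.rpow_add hsr (β+α) (α+α), Real.rpow_add hsr α α,
      Real.mul_rpow hs.le hr.le, Real.mul_rpow hs.le hr.le]
    ring
  have e2 : (s*r)^(-α) = ((s^α)*(r^α))⁻¹ := by
    rw [Real.rpow_neg hsr.le, Real.mul_rpow hs.le hr.le]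
  have e3 : (s*r)^α = s^α * r^α := Real.mul_rpow hs.le hr.le
  have e4 : s^(-(β+α)) = (s^(β+α))⁻¹ := Real.rpow_neg hs.le _
  have e5 : (s*r)^(2*α) = (s^α * r^α) * (s^α * r^α) := by
    rw [show (2:ℝ)*α = α + α by ring, Real.rpow_add hsr, e3]
  have hsa : (0:ℝ) < s^α := rpow_pos_of_pos hs α
  have hra : (0:ℝ) < r^α := rpow_pos_of_pos hr α
  have hsb : (0:ℝ) < s^(β+α) := rpow_pos_of_pos hs _
  have hrb : (0:ℝ) < r^(β+α) := rpow_pos_of_pos hr _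
  rw [show pn 3 α β s r = ((β + 1) * (β + 3) * (s * r) ^ (2 * α)
      + (s * r) ^ α * (4 * β + 5 - 3 * α - 3 * β * α - α ^ 2)
      + (α - 1) * (α - 3)) / (1 + (s * r) ^ α) ^ (β / α + 3) from if_neg (by norm_num),
    e1, e2, e3, e4, e5]
  field_simp

lemma pn_tendsto (n : ℕ) (hn : n = 1 ∨ n = 3) (α β s : ℝ)
    (hα : 0 < α) (hβ : 0 < β) (hs : 0 < s) :
    ∃ c : ℝ, 0 < c ∧
      Tendsto (fun r => r ^ (β + α) * pn n α β s r) atTop (nhds c) := by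
  have h0 : Tendsto (fun r : ℝ => (s * r) ^ (-α)) atTop (nhds 0) :=
    (tendsto_rpow_neg_atTop hα).comp (tendsto_id.const_mul_atTop hs)
  have hspos : (0:ℝ) < s ^ (-(β+α)) := rpow_pos_of_pos hs _
  rcases hn with rfl | rfl
  · refine ⟨(β+1) * s^(-(β+α)), by positivity, ?_⟩
    have hnum : Tendsto (fun r : ℝ => (β+1) + (1-α)*(s*r)^(-α)) atTop (nhds (β+1)) := by
      simpa using tendsto_const_nhds.add (h0.const_mul (1-α))
    have hden : Tendsto (fun r : ℝ => ((s*r)^(-α)+1)^(β/α+2)) atTop (nhds 1) := by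
      have := (h0.add (tendsto_const_nhds (x := (1:ℝ)))).rpow_const (p := β/α+2) (Or.inl ?_)
      · simpa using this
      · norm_num
    have hmain := (hnum.mul_const (s^(-(β+α)))).div hden one_ne_zero
    rw [div_one] at hmain
    refine hmain.congr' ?_
    filter_upwards [eventually_gt_atTop 0] with r hr
    exact (pn1_eq α β s r hα hs hr).symm
  · refine ⟨(β+1)*(β+3) * s^(-(β+α)), by positivity, ?_⟩
    have hnum : Tendsto (fun r : ℝ => (β+1)*(β+3)
        + (4*β+5-3*α-3*β*α-α^2)*(s*r)^(-α) + (α-1)*(α-3)*((s*r)^(-α))^2)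
        atTop (nhds ((β+1)*(β+3))) := by
      have h2 : Tendsto (fun r : ℝ => ((s*r)^(-α))^2) atTop (nhds 0) := by
        simpa using h0.pow 2
      simpa using (tendsto_const_nhds.add (h0.const_mul (4*β+5-3*α-3*β*α-α^2))).add
        (h2.const_mul ((α-1)*(α-3)))
    have hden : Tendsto (fun r : ℝ => ((s*r)^(-α)+1)^(β/α+3)) atTop (nhds 1) := by
      have := (h0.add (tendsto_const_nhds (x := (1:ℝ)))).rpow_const (p := β/α+3) (Or.inl ?_)
      · simpa using this
      · norm_num
    have hmain := (hnum.mul_const (s^(-(β+α)))).div hden one_ne_zero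
    rw [div_one] at hmain
    refine hmain.congr' ?_
    filter_upwards [eventually_gt_atTop 0] with r hr
    exact (pn3_eq α β s r hα hs hr).symm

lemma pn_nonneg (n : ℕ) (α β s r : ℝ)
    (hα : 0 < α) (hα1 : α ≤ 1) (hβ : 0 < β) (hs : 0 < s) (hr : 0 < r) :
    0 ≤ pn n α β s r := by
  have hsr : 0 < s * r := mul_pos hs hr
  have hx : (0:ℝ) ≤ (s*r)^α := Real.rpow_nonneg hsr.le α
  have hden : (0:ℝ) < 1 + (s*r)^α := by positivity
  unfold pn
  split_ifs
  · apply div_nonneg _ (Real.rpow_pos_of_pos hden _).le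
    nlinarith
  · apply div_nonneg _ (Real.rpow_pos_of_pos hden _).le
    have e5 : (s*r)^(2*α) = (s*r)^α * (s*r)^α := by
      rw [show (2:ℝ)*α = α + α by ring, Real.rpow_add hsr]
    rw [e5]
    nlinarith [mul_nonneg hx hx, mul_nonneg hx hβ.le, mul_nonneg (mul_nonneg hx hx) hβ.le,
      mul_nonneg hx (sub_nonneg.mpr hα1), mul_nonneg (mul_nonneg hx hβ.le) (sub_nonneg.mpr hα1),
      mul_nonneg (mul_nonneg (mul_nonneg hx hx) hβ.le) hβ.le,
      mul_nonneg (mul_nonneg hx hx) (mul_nonneg hβ.le hβ.le)]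

/-- If `β12 < (β11 + β22)/2`, then the infimum appearing in the sufficient condition for
the bivariate generalized Cauchy model is zero. -/
theorem bivariate_generalized_cauchy_inf_zero
    (n : ℕ) (hn : n = 1 ∨ n = 3)
    (α11 α12 α22 β11 β12 β22 s11 s12 s22 : ℝ)
    (hα11 : α11 ∈ Ioc (0 : ℝ) 1) (hα22 : α22 ∈ Ioc (0 : ℝ) 1)
    (hα12 : α12 ∈ Ioc (0 : ℝ) 2)
    (hβ11 : 0 < β11) (hβ12 : 0 < β12) (hβ22 : 0 < β22)
    (hs11 : 0 < s11) (hs12 : 0 < s12) (hs22 : 0 < s22)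
    (hβ : β12 < (β11 + β22) / 2) :
    sInf ((fun r : ℝ =>
        r ^ (α11 + α22 - 2 * α12) *
          (pn n α11 β11 s11 r * pn n α22 β22 s22 r) / (pn n α12 β12 s12 r) ^ 2) ''
      {r : ℝ | 0 < r ∧ pn n α12 β12 s12 r ≠ 0}) = 0 := by
  obtain ⟨c1, hc1, h1⟩ := pn_tendsto n hn α11 β11 s11 hα11.1 hβ11 hs11
  obtain ⟨c2, hc2, h2⟩ := pn_tendsto n hn α22 β22 s22 hα22.1 hβ22 hs22
  obtain ⟨c3, hc3, h3⟩ := pn_tendsto n hn α12 β12 s12 hα12.1 hβ12 hs12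
  set f : ℝ → ℝ := fun r =>
      r ^ (α11 + α22 - 2 * α12) *
        (pn n α11 β11 s11 r * pn n α22 β22 s22 r) / (pn n α12 β12 s12 r) ^ 2 with hf
  set S := f '' {r : ℝ | 0 < r ∧ pn n α12 β12 s12 r ≠ 0} with hS
  have hSnonneg : ∀ x ∈ S, 0 ≤ x := by
    rintro x ⟨r, ⟨hr, -⟩, rfl⟩
    have n1 := pn_nonneg n α11 β11 s11 r hα11.1 hα11.2 hβ11 hs11 hr
    have n2 := pn_nonneg n α22 β22 s22 r hα22.1 hα22.2 hβ22 hs22 hr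
    have hrp : (0:ℝ) ≤ r ^ (α11 + α22 - 2 * α12) := Real.rpow_nonneg hr.le _
    exact div_nonneg (mul_nonneg hrp (mul_nonneg n1 n2)) (sq_nonneg _)
  have hbdd : BddBelow S := ⟨0, fun x hx => hSnonneg x hx⟩
  have hD : Tendsto (fun r : ℝ => r ^ (2 * β12 - (β11 + β22))) atTop (nhds 0) := by
    rw [show 2 * β12 - (β11 + β22) = -((β11 + β22) - 2 * β12) by ring]
    exact tendsto_rpow_neg_atTop (by linarith)
  have hC2 : Tendsto (fun r : ℝ => (r ^ (β12 + α12) * pn n α12 β12 s12 r) ^ 2)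
      atTop (nhds (c3 ^ 2)) := h3.pow 2
  have hftend : Tendsto f atTop (nhds 0) := by
    have hABCD := ((h1.mul h2).div hC2 (pow_ne_zero 2 hc3.ne')).mul hD
    rw [mul_zero] at hABCD
    refine hABCD.congr' ?_
    filter_upwards [eventually_gt_atTop 0] with r hr
    by_cases hp3 : pn n α12 β12 s12 r = 0
    · simp [f, hp3]
    have key : r ^ (β11 + α11) * r ^ (β22 + α22) * r ^ (2 * β12 - (β11 + β22))
        = r ^ (α11 + α22 - 2 * α12) * (r ^ (β12 + α12)) ^ 2 := by
      rw [← Real.rpow_natCast (r ^ (β12 + α12)) 2, ← Real.rpow_mul hr.le,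
        ← Real.rpow_add hr, ← Real.rpow_add hr, ← Real.rpow_add hr]
      congr 1
      push_cast; ring
    have hc : r ^ (β12 + α12) ≠ 0 := (Real.rpow_pos_of_pos hr _).ne'
    simp only [f, Pi.div_apply]
    field_simp
    rw [show β12 * 2 - (β11 + β22) = 2 * β12 - (β11 + β22) by ring,
      show α11 + α22 - α12 * 2 = α11 + α22 - 2 * α12 by ring]
    linear_combination (pn n α11 β11 s11 r * pn n α22 β22 s22 r) * key
  refine le_antisymm ?_ (Real.sInf_nonneg hSnonneg)
  by_contra hlt
  push_neg at hlt
  have hev1 : ∀ᶠ r : ℝ in atTop, f r < sInf S := hftend.eventually (gt_mem_nhds hlt)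
  have hev2 : ∀ᶠ r : ℝ in atTop, 0 < r ^ (β12 + α12) * pn n α12 β12 s12 r :=
    h3.eventually (lt_mem_nhds hc3)
  obtain ⟨r, ⟨hr0, hfr⟩, hpos⟩ := (((eventually_gt_atTop 0).and hev1).and hev2).exists
  have hp3 : pn n α12 β12 s12 r ≠ 0 := by
    intro h
    rw [h, mul_zero] at hpos
    exact lt_irrefl 0 hpos
  exact absurd (csInf_le hbdd ⟨r, ⟨hr0, hp3⟩, rfl⟩) (not_le.mpr hfr)
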